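/- Let C be a braided monoidal category and A₁ = (A₁, t¹, m₁, η₁), A₂ = (A₂, t², m₂, η₂) half-braided algebras in C. Then the component T = t¹_{A₂} : A₁ ⊗ A₂ → A₂ ⊗ A₁ of the half-braiding of A₁ at the object A₂ is an isomorphism of algebras from the braided tensor product A₁ ⊗̃ A₂ to the braided tensor product A₂ ⊗̃ A₁. -/

import Mathlib

open CategoryTheory MonoidalCategory

variable {C : Type*} [Category C] [MonoidalCategory C]

/-- `(A, mul, one)` is an algebra object in the monoidal category `C`. -/
structure IsMonObj (A : C) (mul : A ⊗ A ⟶ A) (one : 𝟙_ C ⟶ A) : Prop where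
  one_mul : (one ▷ A) ≫ mul = (λ_ A).hom
  mul_one : (A ◁ one) ≫ mul = (ρ_ A).hom
  mul_assoc : (mul ▷ A) ≫ mul = (α_ A A A).hom ≫ (A ◁ mul) ≫ mul

/-- The family `t X : V ⊗ X ⟶ X ⊗ V` is a half-braiding for `V`. -/
structure IsHalfBraiding (V : C) (t : ∀ X : C, V ⊗ X ⟶ X ⊗ V) : Prop where
  isIso : ∀ X : C, IsIso (t X)
  naturality : ∀ {X Y : C} (f : X ⟶ Y), (V ◁ f) ≫ t Y = t X ≫ (f ▷ V)
  tensor : ∀ X Y : C, t (X ⊗ Y) =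
    (α_ V X Y).inv ≫ (t X ▷ Y) ≫ (α_ X V Y).hom ≫ (X ◁ t Y) ≫ (α_ X Y V).inv


theorem IsHalfBraiding.unit' {V : C} {t : ∀ X : C, V ⊗ X ⟶ X ⊗ V} (h : IsHalfBraiding V t) :
    t (𝟙_ C) = (ρ_ V).hom ≫ (λ_ V).inv := by
  haveI := h.isIso (𝟙_ C)
  have E := h.naturality (λ_ (𝟙_ C)).hom
  rw [h.tensor] at E
  have e1 : (V ◁ (λ_ (𝟙_ C)).hom) = (α_ V (𝟙_ C) (𝟙_ C)).inv ≫ ((ρ_ V).hom ▷ 𝟙_ C) := by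
    monoidal
  have e2 : (α_ (𝟙_ C) V (𝟙_ C)).hom ≫ (𝟙_ C ◁ t (𝟙_ C)) ≫ (α_ (𝟙_ C) (𝟙_ C) V).inv ≫
      ((λ_ (𝟙_ C)).hom ▷ V) = ((λ_ V).hom ▷ 𝟙_ C) ≫ t (𝟙_ C) := by
    calc (α_ (𝟙_ C) V (𝟙_ C)).hom ≫ (𝟙_ C ◁ t (𝟙_ C)) ≫ (α_ (𝟙_ C) (𝟙_ C) V).inv ≫
        ((λ_ (𝟙_ C)).hom ▷ V)
        = (α_ (𝟙_ C) V (𝟙_ C)).hom ≫ (𝟙_ C ◁ t (𝟙_ C)) ≫ (λ_ (𝟙_ C ⊗ V)).hom := by monoidal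
      _ = (α_ (𝟙_ C) V (𝟙_ C)).hom ≫ (λ_ (V ⊗ 𝟙_ C)).hom ≫ t (𝟙_ C) := by
            rw [leftUnitor_naturality]
      _ = ((λ_ V).hom ▷ 𝟙_ C) ≫ t (𝟙_ C) := by
            rw [← Category.assoc]; congr 1; monoidal
  rw [e1] at E
  simp only [Category.assoc] at E
  rw [e2] at E
  rw [cancel_epi (α_ V (𝟙_ C) (𝟙_ C)).inv, ← Category.assoc, cancel_mono (t (𝟙_ C)),
    ← comp_whiskerRight, whiskerRight_iff] at E
  rw [E]; simp

variable [BraidedCategory C]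

/-- `(A, t, mul, one)` is a half-braided algebra in the braided category `C`. -/
structure IsHalfBraidedAlg (A : C) (mul : A ⊗ A ⟶ A) (one : 𝟙_ C ⟶ A)
    (t : ∀ X : C, A ⊗ X ⟶ X ⊗ A) : Prop where
  mon : IsMonObj A mul one
  hb : IsHalfBraiding A t
  compat₁ : ∀ X : C, (mul ▷ X) ≫ t X =
    (α_ A A X).hom ≫ (A ◁ (β_ X A).inv) ≫ (α_ A X A).inv ≫
      (t X ▷ A) ≫ (α_ X A A).hom ≫ (X ◁ mul)
  compat₂ : ∀ X : C, (mul ▷ X) ≫ t X =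
    (α_ A A X).hom ≫ (A ◁ t X) ≫ (α_ A X A).inv ≫
      ((β_ A X).hom ▷ A) ≫ (α_ X A A).hom ≫ (X ◁ mul)

/-- The multiplication of the braided tensor product of two algebras:
`(m₁ ⊗ₘ m₂) ∘ (id ⊗ c_{A₂,A₁} ⊗ id)`. -/
noncomputable def braidedMul (A₁ A₂ : C) (m₁ : A₁ ⊗ A₁ ⟶ A₁) (m₂ : A₂ ⊗ A₂ ⟶ A₂) :
    (A₁ ⊗ A₂) ⊗ (A₁ ⊗ A₂) ⟶ A₁ ⊗ A₂ :=
  tensorμ A₁ A₂ A₁ A₂ ≫ (m₁ ⊗ₘ m₂)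


theorem halfBraidedAlg_mul_key {A₁ A₂ : C} {m₁ : A₁ ⊗ A₁ ⟶ A₁} {η₁ : 𝟙_ C ⟶ A₁}
    {t₁ : ∀ X : C, A₁ ⊗ X ⟶ X ⊗ A₁} {m₂ : A₂ ⊗ A₂ ⟶ A₂}
    (h₁ : IsHalfBraidedAlg A₁ m₁ η₁ t₁) :
    braidedMul A₁ A₂ m₁ m₂ ≫ t₁ A₂ = (t₁ A₂ ⊗ₘ t₁ A₂) ≫ braidedMul A₂ A₁ m₂ m₁ := by
  rw [braidedMul, braidedMul, Category.assoc]
  calc tensorμ A₁ A₂ A₁ A₂ ≫ (m₁ ⊗ₘ m₂) ≫ t₁ A₂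
      = tensorμ A₁ A₂ A₁ A₂ ≫ (m₁ ▷ (A₂ ⊗ A₂)) ≫ (A₁ ◁ m₂) ≫ t₁ A₂ := by
        rw [tensorHom_def_assoc]
    _ = tensorμ A₁ A₂ A₁ A₂ ≫ (m₁ ▷ (A₂ ⊗ A₂)) ≫ t₁ (A₂ ⊗ A₂) ≫ (m₂ ▷ A₁) := by
        rw [h₁.hb.naturality]
    _ = tensorμ A₁ A₂ A₁ A₂ ≫ (m₁ ▷ (A₂ ⊗ A₂)) ≫ ((α_ A₁ A₂ A₂).inv ≫ (t₁ A₂ ▷ A₂) ≫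
          (α_ A₂ A₁ A₂).hom ≫ (A₂ ◁ t₁ A₂) ≫ (α_ A₂ A₂ A₁).inv) ≫ (m₂ ▷ A₁) := by
        rw [h₁.hb.tensor]
    _ = tensorμ A₁ A₂ A₁ A₂ ≫ (α_ (A₁ ⊗ A₁) A₂ A₂).inv ≫ (((m₁ ▷ A₂) ≫ t₁ A₂) ▷ A₂) ≫
          (α_ A₂ A₁ A₂).hom ≫ (A₂ ◁ t₁ A₂) ≫ (α_ A₂ A₂ A₁).inv ≫ (m₂ ▷ A₁) := by
        monoidal
    _ = tensorμ A₁ A₂ A₁ A₂ ≫ (α_ (A₁ ⊗ A₁) A₂ A₂).inv ≫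
          (((α_ A₁ A₁ A₂).hom ≫ (A₁ ◁ (β_ A₂ A₁).inv) ≫ (α_ A₁ A₂ A₁).inv ≫
            (t₁ A₂ ▷ A₁) ≫ (α_ A₂ A₁ A₁).hom ≫ (A₂ ◁ m₁)) ▷ A₂) ≫
          (α_ A₂ A₁ A₂).hom ≫ (A₂ ◁ t₁ A₂) ≫ (α_ A₂ A₂ A₁).inv ≫ (m₂ ▷ A₁) := by
        rw [h₁.compat₁]
    _ = (α_ A₁ A₂ (A₁ ⊗ A₂)).hom ≫ (A₁ ◁ (α_ A₂ A₁ A₂).inv) ≫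
          (A₁ ◁ (((β_ A₂ A₁).hom ≫ (β_ A₂ A₁).inv) ▷ A₂)) ≫
          (α_ A₁ (A₂ ⊗ A₁) A₂).inv ≫ ((α_ A₁ A₂ A₁).inv ▷ A₂) ≫
          ((t₁ A₂ ▷ A₁) ▷ A₂) ≫ ((α_ A₂ A₁ A₁).hom ▷ A₂) ≫ ((A₂ ◁ m₁) ▷ A₂) ≫
          (α_ A₂ A₁ A₂).hom ≫ (A₂ ◁ t₁ A₂) ≫ (α_ A₂ A₂ A₁).inv ≫ (m₂ ▷ A₁) := by
        rw [tensorμ]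
        monoidal
    _ = (α_ A₁ A₂ (A₁ ⊗ A₂)).hom ≫ (A₁ ◁ (α_ A₂ A₁ A₂).inv) ≫
          (α_ A₁ (A₂ ⊗ A₁) A₂).inv ≫ ((α_ A₁ A₂ A₁).inv ▷ A₂) ≫
          ((t₁ A₂ ▷ A₁) ▷ A₂) ≫ ((α_ A₂ A₁ A₁).hom ▷ A₂) ≫ ((A₂ ◁ m₁) ▷ A₂) ≫
          (α_ A₂ A₁ A₂).hom ≫ (A₂ ◁ t₁ A₂) ≫ (α_ A₂ A₂ A₁).inv ≫ (m₂ ▷ A₁) := by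
        simp
    _ = (α_ A₁ A₂ (A₁ ⊗ A₂)).hom ≫ (A₁ ◁ (α_ A₂ A₁ A₂).inv) ≫
          (α_ A₁ (A₂ ⊗ A₁) A₂).inv ≫ ((α_ A₁ A₂ A₁).inv ▷ A₂) ≫
          ((t₁ A₂ ▷ A₁) ▷ A₂) ≫ ((α_ A₂ A₁ A₁).hom ▷ A₂) ≫ (α_ A₂ (A₁ ⊗ A₁) A₂).hom ≫
          (A₂ ◁ ((m₁ ▷ A₂) ≫ t₁ A₂)) ≫ (α_ A₂ A₂ A₁).inv ≫ (m₂ ▷ A₁) := by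
        monoidal
    _ = (α_ A₁ A₂ (A₁ ⊗ A₂)).hom ≫ (A₁ ◁ (α_ A₂ A₁ A₂).inv) ≫
          (α_ A₁ (A₂ ⊗ A₁) A₂).inv ≫ ((α_ A₁ A₂ A₁).inv ▷ A₂) ≫
          ((t₁ A₂ ▷ A₁) ▷ A₂) ≫ ((α_ A₂ A₁ A₁).hom ▷ A₂) ≫ (α_ A₂ (A₁ ⊗ A₁) A₂).hom ≫
          (A₂ ◁ ((α_ A₁ A₁ A₂).hom ≫ (A₁ ◁ t₁ A₂) ≫ (α_ A₁ A₂ A₁).inv ≫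
            ((β_ A₁ A₂).hom ▷ A₁) ≫ (α_ A₂ A₁ A₁).hom ≫ (A₂ ◁ m₁))) ≫
          (α_ A₂ A₂ A₁).inv ≫ (m₂ ▷ A₁) := by
        rw [h₁.compat₂]
    _ = (t₁ A₂ ⊗ₘ t₁ A₂) ≫ tensorμ A₂ A₁ A₂ A₁ ≫ (m₂ ⊗ₘ m₁) := by
        rw [tensorHom_def (t₁ A₂) (t₁ A₂), tensorHom_def' m₂ m₁, tensorμ]
        monoidal

/-- Let `A₁, A₂` be half-braided algebras in a braided monoidal category
`C`.  Then the component `T = t¹_{A₂} : A₁ ⊗ A₂ ⟶ A₂ ⊗ A₁` of the half-braiding of `A₁`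
at the object `A₂` is an isomorphism of algebras from the braided tensor product
`A₁ ⊗̃ A₂` to the braided tensor product `A₂ ⊗̃ A₁`: it is invertible, preserves units and
preserves multiplications. -/
theorem halfBraiding_component_algebra_iso
    {A₁ A₂ : C} {m₁ : A₁ ⊗ A₁ ⟶ A₁} {η₁ : 𝟙_ C ⟶ A₁} {t₁ : ∀ X : C, A₁ ⊗ X ⟶ X ⊗ A₁}
    {m₂ : A₂ ⊗ A₂ ⟶ A₂} {η₂ : 𝟙_ C ⟶ A₂} {t₂ : ∀ X : C, A₂ ⊗ X ⟶ X ⊗ A₂}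
    (h₁ : IsHalfBraidedAlg A₁ m₁ η₁ t₁) (h₂ : IsHalfBraidedAlg A₂ m₂ η₂ t₂) :
    IsIso (t₁ A₂) ∧
    ((λ_ (𝟙_ C)).inv ≫ (η₁ ⊗ₘ η₂)) ≫ t₁ A₂ = (λ_ (𝟙_ C)).inv ≫ (η₂ ⊗ₘ η₁) ∧
    braidedMul A₁ A₂ m₁ m₂ ≫ t₁ A₂ = (t₁ A₂ ⊗ₘ t₁ A₂) ≫ braidedMul A₂ A₁ m₂ m₁ := by
  refine ⟨h₁.hb.isIso A₂, ?_, halfBraidedAlg_mul_key h₁⟩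
  rw [Category.assoc, tensorHom_def_assoc, h₁.hb.naturality, h₁.hb.unit']
  simp [tensorHom_def', ← unitors_equal]
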